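/- arXiv:1308.1545 — 7 statements merged into one kernel-verified Lean document; each statement's English description precedes it below -/
import Mathlib

section
/- With τ = Σ_{A ∈ {−1,1}^M} Δ_A · exp(Σ_j α_j θ_j) and τ_H the Hirota tau function τ_H = Σ_{μ ∈ {0,1}^M} exp(Σ_j μ_j η_j + Σ_{j<k} b_{jk} μ_j μ_k), one has τ_H = (1/Δ_{(−1,...,−1)}) · exp(θ_1 + ... + θ_M) · τ, under the identification μ_j = (α_j+1)/2 and a suitable shift of the constants: η_j = 2θ_j + log ∏_{k≠j} |(p_k+p_j)/(p_k−p_j)|, where b_{jk} = log[(p_k−p_j)²/(p_k+p_j)²]. -/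
open Finset Real

/-- sign associated to a Boolean: `true ↦ 1`, `false ↦ -1` -/
def sgn (b : Bool) : ℝ := if b then 1 else -1

/-- `μ_j = (α_j + 1)/2 ∈ {0,1}` -/
def mu (b : Bool) : ℝ := if b then 1 else 0

/-- absolute value of the Vandermonde determinant of `(α_1 p_1, …, α_M p_M)` -/
def Δ {M : ℕ} (p : Fin M → ℝ) (A : Fin M → Bool) : ℝ :=
  |∏ k, ∏ j ∈ Finset.Iio k, (sgn (A k) * p k - sgn (A j) * p j)|

lemma sum_erase_pairs {M : ℕ} (f : Fin M → Fin M → ℝ) :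
    ∑ j, ∑ k ∈ univ.erase j, f j k = ∑ k, ∑ j ∈ Iio k, (f j k + f k j) := by
  have he : ∀ j : Fin M, (univ.erase j : Finset (Fin M)) = Iio j ∪ Ioi j := by
    intro j; ext k; simp [← ne_eq, ne_comm, lt_or_lt_iff_ne]
  calc ∑ j, ∑ k ∈ univ.erase j, f j k
      = ∑ j, ((∑ k ∈ Iio j, f j k) + ∑ k ∈ Ioi j, f j k) := by
        refine Finset.sum_congr rfl fun j _ => ?_
        rw [he j, Finset.sum_union]
        exact Finset.disjoint_left.2 fun a ha hb => absurd (Finset.mem_Iio.1 ha)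
          (not_lt.2 (le_of_lt (Finset.mem_Ioi.1 hb)))
    _ = (∑ j, ∑ k ∈ Iio j, f j k) + ∑ j, ∑ k ∈ Ioi j, f j k := Finset.sum_add_distrib
    _ = (∑ k, ∑ j ∈ Iio k, f k j) + ∑ k, ∑ j ∈ Iio k, f j k := by
        congr 1
        exact Finset.sum_comm' (fun x y => by simp [and_comm])
    _ = ∑ k, ∑ j ∈ Iio k, (f j k + f k j) := by
        rw [← Finset.sum_add_distrib]
        refine Finset.sum_congr rfl fun k _ => ?_
        rw [← Finset.sum_add_distrib]
        exact Finset.sum_congr rfl fun j _ => add_comm _ _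

lemma pair_exp (x y : ℝ) (hx : 0 < x) (hxy : x < y) (a b : Bool) :
    Real.exp (mu a * Real.log ((y + x) / (y - x)) + mu b * Real.log ((y + x) / (y - x))
      + Real.log ((y - x)^2 / (y + x)^2) * mu a * mu b)
    = |sgn b * y - sgn a * x| / (y - x) := by
  have hq : 0 < y - x := sub_pos.2 hxy
  have hs : 0 < y + x := by linarith
  have hr : 0 < (y + x) / (y - x) := div_pos hs hq
  cases a <;> cases b <;> simp [mu, sgn]
  · rw [abs_of_nonpos (by linarith), show -(-y + x) = y - x from by ring, div_self hq.ne']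
  · rw [Real.exp_log hr, abs_of_nonneg hs.le]
  · rw [Real.exp_log hr, abs_of_nonpos (by linarith), show -(-y - x) = y + x from by ring]
  · rw [abs_of_nonneg hq.le, div_self hq.ne']
    have h2 : (y - x)^2 / (y + x)^2 = (((y + x) / (y - x))^2)⁻¹ := by
      rw [div_pow, inv_div]
    rw [h2, Real.log_inv, Real.log_pow]
    have hz : Real.log ((y+x)/(y-x)) + Real.log ((y+x)/(y-x))
        + -((2:ℕ) * Real.log ((y+x)/(y-x))) = 0 := by push_cast; ring
    rw [hz, Real.exp_zero]

theorem tauH_eq_tau {M : ℕ} (p θ : Fin M → ℝ)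
    (hp : ∀ j, 0 < p j) (hmono : StrictMono p) :
    (∑ A : Fin M → Bool,
        Real.exp ((∑ j, mu (A j) *
            (2 * θ j + Real.log (∏ k ∈ Finset.univ.erase j, |(p k + p j) / (p k - p j)|)))
          + ∑ k, ∑ j ∈ Finset.Iio k,
              Real.log ((p k - p j)^2 / (p k + p j)^2) * mu (A j) * mu (A k))) =
      (1 / Δ p (fun _ => false)) * Real.exp (∑ j, θ j) *
        (∑ A : Fin M → Bool, Δ p A * Real.exp (∑ j, sgn (A j) * θ j)) := by
  -- basic facts
  have hΔA : ∀ A : Fin M → Bool,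
      Δ p A = ∏ k, ∏ j ∈ Iio k, |sgn (A k) * p k - sgn (A j) * p j| := by
    intro A
    rw [Δ, Finset.abs_prod]
    exact Finset.prod_congr rfl fun k _ => Finset.abs_prod _ _
  have hΔ0 : Δ p (fun _ => false) = ∏ k, ∏ j ∈ Iio k, (p k - p j) := by
    rw [hΔA]
    refine Finset.prod_congr rfl fun k _ => Finset.prod_congr rfl fun j hj => ?_
    have hjk : p j < p k := hmono (Finset.mem_Iio.1 hj)
    simp only [sgn, Bool.false_eq_true, if_false]
    rw [abs_of_nonpos (by linarith), neg_sub']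
    ring
  have hΔ0pos : 0 < Δ p (fun _ => false) := by
    rw [hΔ0]
    exact Finset.prod_pos fun k _ => Finset.prod_pos fun j hj =>
      sub_pos.2 (hmono (Finset.mem_Iio.1 hj))
  -- rewrite RHS as a sum
  rw [Finset.mul_sum]
  refine Finset.sum_congr rfl fun A _ => ?_
  -- per-term identity
  have hnz : ∀ j k : Fin M, k ∈ univ.erase j → |(p k + p j) / (p k - p j)| ≠ 0 := by
    intro j k hk
    have hkj : k ≠ j := Finset.ne_of_mem_erase hk
    have h1 : p k + p j ≠ 0 := by have := hp k; have := hp j; positivity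
    have h2 : p k - p j ≠ 0 := sub_ne_zero.2 fun h => hkj (hmono.injective h)
    simp [abs_ne_zero, div_ne_zero h1 h2]
  -- split the first sum
  have hsplit : (∑ j, mu (A j) *
        (2 * θ j + Real.log (∏ k ∈ Finset.univ.erase j, |(p k + p j) / (p k - p j)|)))
      = (∑ j, 2 * mu (A j) * θ j)
        + ∑ j, ∑ k ∈ univ.erase j, mu (A j) * Real.log |(p k + p j) / (p k - p j)| := by
    rw [← Finset.sum_add_distrib]
    refine Finset.sum_congr rfl fun j _ => ?_
    rw [Real.log_prod (hnz j), mul_add, Finset.mul_sum]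
    ring
  rw [hsplit, sum_erase_pairs (fun j k => mu (A j) * Real.log |(p k + p j) / (p k - p j)|)]
  -- combine the two double sums over pairs
  rw [add_assoc, ← Finset.sum_add_distrib]
  have hinner : ∀ k : Fin M,
      ((∑ j ∈ Iio k, (mu (A j) * Real.log |(p k + p j) / (p k - p j)|
          + mu (A k) * Real.log |(p j + p k) / (p j - p k)|))
        + ∑ j ∈ Iio k, Real.log ((p k - p j)^2 / (p k + p j)^2) * mu (A j) * mu (A k))
      = ∑ j ∈ Iio k, Real.log (|sgn (A k) * p k - sgn (A j) * p j| / (p k - p j)) := by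
    intro k
    rw [← Finset.sum_add_distrib]
    refine Finset.sum_congr rfl fun j hj => ?_
    have hjk : p j < p k := hmono (Finset.mem_Iio.1 hj)
    have hq : 0 < p k - p j := sub_pos.2 hjk
    have hs : 0 < p k + p j := by have := hp j; have := hp k; linarith
    have habs1 : |(p k + p j) / (p k - p j)| = (p k + p j) / (p k - p j) :=
      abs_of_nonneg (le_of_lt (div_pos hs hq))
    have habs2 : |(p j + p k) / (p j - p k)| = (p k + p j) / (p k - p j) := by
      rw [abs_div, abs_of_nonneg (by linarith : (0:ℝ) ≤ p j + p k),
        abs_of_nonpos (by linarith : p j - p k ≤ 0)]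
      congr 1 <;> ring
    rw [habs1, habs2, ← pair_exp (p j) (p k) (hp j) hjk (A j) (A k), Real.log_exp]
  rw [Finset.sum_congr rfl (fun k _ => hinner k), Real.exp_add]
  -- turn the exponential of the pair sum into a product
  have hFpos : ∀ k : Fin M, ∀ j ∈ Iio k,
      0 < |sgn (A k) * p k - sgn (A j) * p j| / (p k - p j) := by
    intro k j hj
    have hjk : p j < p k := hmono (Finset.mem_Iio.1 hj)
    rw [← pair_exp (p j) (p k) (hp j) hjk (A j) (A k)]
    exact Real.exp_pos _
  have hprod : Real.exp (∑ k, ∑ j ∈ Iio k,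
        Real.log (|sgn (A k) * p k - sgn (A j) * p j| / (p k - p j)))
      = ∏ k, ∏ j ∈ Iio k, |sgn (A k) * p k - sgn (A j) * p j| / (p k - p j) := by
    rw [Real.exp_sum]
    refine Finset.prod_congr rfl fun k _ => ?_
    rw [Real.exp_sum]
    exact Finset.prod_congr rfl fun j hj => Real.exp_log (hFpos k j hj)
  rw [hprod]
  -- identify the product with Δ_A / Δ_0
  have hratio : (∏ k, ∏ j ∈ Iio k, |sgn (A k) * p k - sgn (A j) * p j| / (p k - p j))
      = Δ p A / Δ p (fun _ => false) := by
    rw [hΔA, hΔ0, ← Finset.prod_div_distrib]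
    exact Finset.prod_congr rfl fun k _ => Finset.prod_div_distrib _ _
  rw [hratio]
  -- exponentials of the θ sums
  have hE : Real.exp (∑ j, θ j) * Real.exp (∑ j, sgn (A j) * θ j)
      = Real.exp (∑ j, 2 * mu (A j) * θ j) := by
    rw [← Real.exp_add, ← Finset.sum_add_distrib]
    congr 1
    refine Finset.sum_congr rfl fun j _ => ?_
    cases hj : A j <;> (simp [sgn, mu]; try ring)
  have hΔ0ne : Δ p (fun _ => false) ≠ 0 := ne_of_gt hΔ0pos
  rw [← hE]
  field_simp
end

section
/- If τ = e^{Θ_A} + e^{Θ_B} + e^{Θ_C} with Θ_X(x) = p_X x + c_X affine and p_A, p_B, p_C pairwise distinct, then at a point where Θ_A = Θ_B = Θ_C, the quantity u = 2 (log τ)_{xx} equals (4/9)(p_A² + p_B² + p_C² − p_A p_B − p_A p_C − p_B p_C). -/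
open Real

theorem triple_phase_amplitude (pA pB pC cA cB cC x₀ : ℝ)
    (hAB : pA ≠ pB) (hAC : pA ≠ pC) (hBC : pB ≠ pC)
    (heqAB : pA * x₀ + cA = pB * x₀ + cB)
    (heqBC : pB * x₀ + cB = pC * x₀ + cC) :
    2 * deriv (deriv (fun x => Real.log
        (Real.exp (pA * x + cA) + Real.exp (pB * x + cB) + Real.exp (pC * x + cC)))) x₀
      = (4/9) * (pA^2 + pB^2 + pC^2 - pA*pB - pA*pC - pB*pC) := by
  have hE : ∀ (p c : ℝ) (x : ℝ),
      HasDerivAt (fun x => Real.exp (p * x + c)) (p * Real.exp (p * x + c)) x := by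
    intro p c x
    have h1 : HasDerivAt (fun x : ℝ => p * x + c) p x := by
      simpa using ((hasDerivAt_id x).const_mul p).add_const c
    simpa [mul_comm] using h1.exp
  set τ : ℝ → ℝ := fun x =>
    Real.exp (pA * x + cA) + Real.exp (pB * x + cB) + Real.exp (pC * x + cC) with hτdef
  have hτpos : ∀ x, 0 < τ x := fun x => by positivity
  set N : ℝ → ℝ := fun x =>
    pA * Real.exp (pA * x + cA) + pB * Real.exp (pB * x + cB) + pC * Real.exp (pC * x + cC)
    with hNdef
  have hτ' : ∀ x, HasDerivAt τ (N x) x := fun x =>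
    ((hE pA cA x).add (hE pB cB x)).add (hE pC cC x)
  have hN' : ∀ x, HasDerivAt N
      (pA^2 * Real.exp (pA * x + cA) + pB^2 * Real.exp (pB * x + cB)
        + pC^2 * Real.exp (pC * x + cC)) x := by
    intro x
    have := (((hE pA cA x).const_mul pA).add ((hE pB cB x).const_mul pB)).add
      ((hE pC cC x).const_mul pC)
    simp only [pow_two, mul_assoc]
    exact this
  have hlog : deriv (fun x => Real.log (τ x)) = fun x => N x / τ x := by
    funext x
    exact ((hτ' x).log (hτpos x).ne').deriv
  have hgoal : deriv (deriv (fun x => Real.log (τ x))) x₀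
      = ((pA^2 * Real.exp (pA * x₀ + cA) + pB^2 * Real.exp (pB * x₀ + cB)
          + pC^2 * Real.exp (pC * x₀ + cC)) * τ x₀ - N x₀ * N x₀) / (τ x₀)^2 := by
    rw [hlog]
    exact ((hN' x₀).div (hτ' x₀) (hτpos x₀).ne').deriv
  show 2 * deriv (deriv (fun x => Real.log (τ x))) x₀ = _
  rw [hgoal, hNdef, hτdef]
  simp only [← heqAB, ← heqBC]
  have h := Real.exp_ne_zero (pA * x₀ + cA)
  field_simp
  ring
end

section
/- For the 2-soliton KdV solution with c_1 = c_2 = 0, u_{xx}(0,0) = −4(p_2−p_1)(p_2+p_1)(p_2² − 3p_1²). Consequently, the profile u(x,0) has a strict local minimum at x = 0 if p_2/p_1 < √3 and a strict local maximum if p_2/p_1 > √3. -/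
open Real

noncomputable def tau2 (p₁ p₂ x t : ℝ) : ℝ :=
  (p₂ - p₁) * (Real.exp (-(p₁*(x + p₁^2*t)) - p₂*(x + p₂^2*t))
      + Real.exp (p₁*(x + p₁^2*t) + p₂*(x + p₂^2*t)))
    + (p₁ + p₂) * (Real.exp (p₁*(x + p₁^2*t) - p₂*(x + p₂^2*t))
      + Real.exp (-(p₁*(x + p₁^2*t)) + p₂*(x + p₂^2*t)))

noncomputable def u2 (p₁ p₂ x t : ℝ) : ℝ :=
  2 * deriv (deriv (fun y => Real.log (tau2 p₁ p₂ y t))) x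

noncomputable def T0 (a b x : ℝ) : ℝ :=
  b*(Real.exp (a*x) + Real.exp (-a*x)) + a*(Real.exp (b*x) + Real.exp (-b*x))
noncomputable def T1 (a b x : ℝ) : ℝ :=
  b*a*(Real.exp (a*x) - Real.exp (-a*x)) + a*b*(Real.exp (b*x) - Real.exp (-b*x))
noncomputable def T2 (a b x : ℝ) : ℝ :=
  b*a^2*(Real.exp (a*x) + Real.exp (-a*x)) + a*b^2*(Real.exp (b*x) + Real.exp (-b*x))
noncomputable def T3 (a b x : ℝ) : ℝ :=
  b*a^3*(Real.exp (a*x) - Real.exp (-a*x)) + a*b^3*(Real.exp (b*x) - Real.exp (-b*x))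
noncomputable def T4 (a b x : ℝ) : ℝ :=
  b*a^4*(Real.exp (a*x) + Real.exp (-a*x)) + a*b^4*(Real.exp (b*x) + Real.exp (-b*x))

lemma hasDerivAt_expMul (c x : ℝ) :
    HasDerivAt (fun y => Real.exp (c*y)) (c * Real.exp (c*x)) x := by
  simpa [mul_comm] using ((hasDerivAt_id x).const_mul c).exp

lemma hT0 (a b x : ℝ) : HasDerivAt (fun y => T0 a b y) (T1 a b x) x := by
  unfold T0 T1
  have h := (((hasDerivAt_expMul a x).add (hasDerivAt_expMul (-a) x)).const_mul b).add
    (((hasDerivAt_expMul b x).add (hasDerivAt_expMul (-b) x)).const_mul a)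
  refine h.congr_deriv ?_
  ring

lemma hT1 (a b x : ℝ) : HasDerivAt (fun y => T1 a b y) (T2 a b x) x := by
  unfold T1 T2
  have h := (((hasDerivAt_expMul a x).sub (hasDerivAt_expMul (-a) x)).const_mul (b*a)).add
    (((hasDerivAt_expMul b x).sub (hasDerivAt_expMul (-b) x)).const_mul (a*b))
  refine h.congr_deriv ?_
  ring

lemma hT2 (a b x : ℝ) : HasDerivAt (fun y => T2 a b y) (T3 a b x) x := by
  unfold T2 T3
  have h := (((hasDerivAt_expMul a x).add (hasDerivAt_expMul (-a) x)).const_mul (b*a^2)).add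
    (((hasDerivAt_expMul b x).add (hasDerivAt_expMul (-b) x)).const_mul (a*b^2))
  refine h.congr_deriv ?_
  ring

lemma hT3 (a b x : ℝ) : HasDerivAt (fun y => T3 a b y) (T4 a b x) x := by
  unfold T3 T4
  have h := (((hasDerivAt_expMul a x).sub (hasDerivAt_expMul (-a) x)).const_mul (b*a^3)).add
    (((hasDerivAt_expMul b x).sub (hasDerivAt_expMul (-b) x)).const_mul (a*b^3))
  refine h.congr_deriv ?_
  ring

lemma T0pos {a b : ℝ} (ha : 0 < a) (hb : 0 < b) (x : ℝ) : 0 < T0 a b x := by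
  unfold T0; positivity

noncomputable def U (a b x : ℝ) : ℝ :=
  2 * ((T2 a b x * T0 a b x - T1 a b x ^ 2) / T0 a b x ^ 2)

noncomputable def G (a b x : ℝ) : ℝ :=
  2 * ((T3 a b x * T0 a b x ^ 2 - 3 * T0 a b x * T1 a b x * T2 a b x + 2 * T1 a b x ^ 3)
      / T0 a b x ^ 3)

noncomputable def H (a b x : ℝ) : ℝ :=
  2 * (((T4 a b x * T0 a b x ^ 2 + 2 * T3 a b x * T0 a b x * T1 a b x
        - 3 * (T1 a b x ^ 2 * T2 a b x + T0 a b x * T2 a b x ^ 2 + T0 a b x * T1 a b x * T3 a b x)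
        + 6 * T1 a b x ^ 2 * T2 a b x) * T0 a b x
      - 3 * (T3 a b x * T0 a b x ^ 2 - 3 * T0 a b x * T1 a b x * T2 a b x + 2 * T1 a b x ^ 3)
        * T1 a b x) / T0 a b x ^ 4)

lemma derivlog {a b : ℝ} (ha : 0 < a) (hb : 0 < b) :
    deriv (fun y => Real.log (T0 a b y)) = fun x => T1 a b x / T0 a b x :=
  funext fun x => ((hT0 a b x).log (T0pos ha hb x).ne').deriv

lemma derivderivlog {a b : ℝ} (ha : 0 < a) (hb : 0 < b) (x : ℝ) :
    deriv (deriv (fun y => Real.log (T0 a b y))) x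
      = (T2 a b x * T0 a b x - T1 a b x ^ 2) / T0 a b x ^ 2 := by
  rw [derivlog ha hb]
  have h := ((hT1 a b x).div (hT0 a b x) (T0pos ha hb x).ne')
  rw [HasDerivAt.deriv (f := fun y => T1 a b y / T0 a b y) h]; ring

lemma hasDerivAt_U {a b : ℝ} (ha : 0 < a) (hb : 0 < b) (x : ℝ) :
    HasDerivAt (fun y => U a b y) (G a b x) x := by
  have hnum : HasDerivAt (fun y => T2 a b y * T0 a b y - T1 a b y ^ 2)
      (T3 a b x * T0 a b x + T2 a b x * T1 a b x - 2 * T1 a b x ^ 1 * T2 a b x) x := by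
    exact (((hT2 a b x).mul (hT0 a b x)).sub ((hT1 a b x).pow 2)).congr_deriv (by norm_num)
  have hden : HasDerivAt (fun y => T0 a b y ^ 2) (2 * T0 a b x ^ 1 * T1 a b x) x :=
    (hT0 a b x).pow 2
  have h := ((hnum.div hden (pow_ne_zero _ (T0pos ha hb x).ne')).const_mul 2)
  refine h.congr_deriv ?_
  unfold G
  have h0 := (T0pos ha hb x).ne'
  field_simp
  ring

lemma hasDerivAt_G {a b : ℝ} (ha : 0 < a) (hb : 0 < b) (x : ℝ) :
    HasDerivAt (fun y => G a b y) (H a b x) x := by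
  have hsq : HasDerivAt (fun y => T0 a b y ^ 2) (2 * T0 a b x ^ 1 * T1 a b x) x :=
    (hT0 a b x).pow 2
  have hnum : HasDerivAt
      (fun y => T3 a b y * T0 a b y ^ 2 - 3 * T0 a b y * T1 a b y * T2 a b y + 2 * T1 a b y ^ 3)
      ((T4 a b x * T0 a b x ^ 2 + T3 a b x * (2 * T0 a b x ^ 1 * T1 a b x))
        - ((3 * T1 a b x * T1 a b x + 3 * T0 a b x * T2 a b x) * T2 a b x
            + 3 * T0 a b x * T1 a b x * T3 a b x)
        + 2 * (3 * T1 a b x ^ 2 * T2 a b x)) x := by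
    have h := (((hT3 a b x).mul hsq).sub
        (((((hT0 a b x).const_mul 3).mul (hT1 a b x)).mul (hT2 a b x)))).add
        (((hT1 a b x).pow 3).const_mul 2)
    exact h.congr_deriv (by norm_num)
  have hden : HasDerivAt (fun y => T0 a b y ^ 3) (3 * T0 a b x ^ 2 * T1 a b x) x := by
    exact ((hT0 a b x).pow 3).congr_deriv (by norm_num)
  have h := ((hnum.div hden (pow_ne_zero _ (T0pos ha hb x).ne')).const_mul 2)
  refine h.congr_deriv ?_
  unfold H
  have h0 := (T0pos ha hb x).ne'
  field_simp
  ring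

lemma aux_min (u : ℝ → ℝ) (hu : Continuous u) {v : ℝ} (hv : 0 < v)
    (hd0 : deriv u 0 = 0) (hdd : HasDerivAt (deriv u) v 0) :
    ∃ δ > 0, ∀ x : ℝ, x ≠ 0 → |x| < δ → u 0 < u x := by
  have hslope := hasDerivAt_iff_tendsto_slope.mp hdd
  have hev : ∀ᶠ y in nhdsWithin (0:ℝ) {(0:ℝ)}ᶜ, 0 < slope (deriv u) 0 y :=
    hslope.eventually (eventually_gt_nhds hv)
  rw [eventually_nhdsWithin_iff, Metric.eventually_nhds_iff] at hev
  obtain ⟨δ, hδ, hball⟩ := hev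
  have hsign : ∀ y : ℝ, y ≠ 0 → |y| < δ → 0 < deriv u y / y := by
    intro y hy hyd
    have h := hball (y := y) (by simpa [Real.dist_eq] using hyd) (by simpa using hy)
    rw [slope_def_field] at h
    simpa [hd0] using h
  refine ⟨δ, hδ, ?_⟩
  intro x hx hxd
  rcases lt_or_gt_of_ne hx with hneg | hpos
  · -- x < 0 : u strictly decreasing on Ioc (-δ) 0
    have hanti : StrictAntiOn u (Set.Ioc (-δ) 0) := by
      apply strictAntiOn_of_deriv_neg (convex_Ioc _ _) hu.continuousOn
      intro y hy
      rw [interior_Ioc] at hy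
      have hy0 : y ≠ 0 := ne_of_lt hy.2
      have hyd : |y| < δ := by rw [abs_of_neg hy.2]; linarith [hy.1]
      have := hsign y hy0 hyd
      have : 0 < (deriv u y / y) * (-y) := mul_pos this (by linarith [hy.2])
      have hyne : y ≠ 0 := hy0
      calc deriv u y = (deriv u y / y) * y := by field_simp
        _ < 0 := by nlinarith
    have hx1 : x ∈ Set.Ioc (-δ) 0 := ⟨by cases abs_lt.mp hxd; linarith, le_of_lt hneg⟩
    have h01 : (0:ℝ) ∈ Set.Ioc (-δ) 0 := ⟨by linarith, le_refl 0⟩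
    exact hanti hx1 h01 hneg
  · -- x > 0 : u strictly increasing on Ico 0 δ
    have hmono : StrictMonoOn u (Set.Ico 0 δ) := by
      apply strictMonoOn_of_deriv_pos (convex_Ico _ _) hu.continuousOn
      intro y hy
      rw [interior_Ico] at hy
      have hy0 : y ≠ 0 := ne_of_gt hy.1
      have hyd : |y| < δ := by rw [abs_of_pos hy.1]; exact hy.2
      have := hsign y hy0 hyd
      calc (0:ℝ) < (deriv u y / y) * y := mul_pos this hy.1
        _ = deriv u y := by field_simp
    have h01 : (0:ℝ) ∈ Set.Ico 0 δ := ⟨le_refl 0, hδ⟩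
    have hx1 : x ∈ Set.Ico 0 δ := ⟨le_of_lt hpos, by cases abs_lt.mp hxd; linarith⟩
    exact hmono h01 hx1 hpos

lemma aux_max (u : ℝ → ℝ) (hu : Continuous u) {v : ℝ} (hv : v < 0)
    (hd0 : deriv u 0 = 0) (hdd : HasDerivAt (deriv u) v 0) :
    ∃ δ > 0, ∀ x : ℝ, x ≠ 0 → |x| < δ → u x < u 0 := by
  have hder : deriv (fun x => -u x) = fun x => -(deriv u x) := funext fun x => deriv.neg
  obtain ⟨δ, hδ, h⟩ := aux_min (fun x => -u x) hu.neg (v := -v) (by linarith)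
    (by rw [hder]; simp [hd0]) (by rw [hder]; exact hdd.neg)
  exact ⟨δ, hδ, fun x hx hxd => by have := h x hx hxd; simpa using this⟩

lemma Gzero (a b : ℝ) : G a b 0 = 0 := by simp [G, T1, T3]

lemma Hzero {a b : ℝ} (ha : 0 < a) (hb : 0 < b) :
    H a b 0 = 2*a*b*(a^2 - 4*a*b + b^2) := by
  have h0 : a + b ≠ 0 := by positivity
  simp only [H, T0, T1, T2, T3, T4, mul_zero, neg_zero, Real.exp_zero]
  field_simp
  ring

theorem two_soliton_uxx_and_extremum (p₁ p₂ : ℝ) (h1 : 0 < p₁) (h12 : p₁ < p₂) :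
    deriv (deriv (fun x => u2 p₁ p₂ x 0)) 0
        = -4 * (p₂ - p₁) * (p₂ + p₁) * (p₂^2 - 3*p₁^2)
    ∧ (p₂ / p₁ < Real.sqrt 3 →
        ∃ δ > 0, ∀ x : ℝ, x ≠ 0 → |x| < δ → u2 p₁ p₂ 0 0 < u2 p₁ p₂ x 0)
    ∧ (Real.sqrt 3 < p₂ / p₁ →
        ∃ δ > 0, ∀ x : ℝ, x ≠ 0 → |x| < δ → u2 p₁ p₂ x 0 < u2 p₁ p₂ 0 0) := by
  have ha : 0 < p₁ + p₂ := by linarith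
  have hb : 0 < p₂ - p₁ := by linarith
  have key1 : ∀ y : ℝ, tau2 p₁ p₂ y 0 = T0 (p₁+p₂) (p₂-p₁) y := by
    intro y
    unfold tau2 T0
    rw [show -(p₁*(y + p₁^2*0)) - p₂*(y + p₂^2*0) = -((p₁+p₂)*y) by ring,
        show p₁*(y + p₁^2*0) + p₂*(y + p₂^2*0) = (p₁+p₂)*y by ring,
        show p₁*(y + p₁^2*0) - p₂*(y + p₂^2*0) = -((p₂-p₁)*y) by ring,
        show -(p₁*(y + p₁^2*0)) + p₂*(y + p₂^2*0) = (p₂-p₁)*y by ring]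
    ring_nf
  have key2 : (fun x => u2 p₁ p₂ x 0) = fun x => U (p₁+p₂) (p₂-p₁) x := by
    funext x
    unfold u2 U
    have : (fun y => Real.log (tau2 p₁ p₂ y 0)) = fun y => Real.log (T0 (p₁+p₂) (p₂-p₁) y) := by
      funext y; rw [key1 y]
    rw [this, derivderivlog ha hb]
  have hderiv : deriv (fun x => u2 p₁ p₂ x 0) = fun x => G (p₁+p₂) (p₂-p₁) x := by
    rw [key2]; funext x; exact (hasDerivAt_U ha hb x).deriv
  have hcont : Continuous (fun x => u2 p₁ p₂ x 0) := by
    rw [key2]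
    exact continuous_iff_continuousAt.mpr fun x => (hasDerivAt_U ha hb x).continuousAt
  have hd0 : deriv (fun x => u2 p₁ p₂ x 0) 0 = 0 := by rw [hderiv]; exact Gzero _ _
  have hdd : HasDerivAt (deriv (fun x => u2 p₁ p₂ x 0)) (H (p₁+p₂) (p₂-p₁) 0) 0 := by
    rw [hderiv]; exact hasDerivAt_G ha hb 0
  have hHval : H (p₁+p₂) (p₂-p₁) 0 = -4 * (p₂ - p₁) * (p₂ + p₁) * (p₂^2 - 3*p₁^2) := by
    rw [Hzero ha hb]; ring
  refine ⟨?_, ?_, ?_⟩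
  · rw [hderiv, (hasDerivAt_G ha hb 0).deriv, hHval]
  · intro hcond
    have hp2 : p₂ < Real.sqrt 3 * p₁ := (div_lt_iff₀ h1).mp hcond
    have hsq : p₂^2 < 3 * p₁^2 := by
      nlinarith [Real.sq_sqrt (by norm_num : (0:ℝ) ≤ 3), Real.sqrt_nonneg 3]
    have hv : 0 < H (p₁+p₂) (p₂-p₁) 0 := by
      rw [hHval]
      nlinarith [mul_pos (mul_pos hb ha) (show 0 < 3*p₁^2 - p₂^2 by linarith)]
    exact aux_min _ hcont hv hd0 hdd
  · intro hcond
    have hp2 : Real.sqrt 3 * p₁ < p₂ := (lt_div_iff₀ h1).mp hcond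
    have hsq : 3 * p₁^2 < p₂^2 := by
      nlinarith [Real.sq_sqrt (by norm_num : (0:ℝ) ≤ 3), Real.sqrt_nonneg 3,
        mul_pos (sub_pos.mpr hp2) (show 0 < p₂ + Real.sqrt 3 * p₁ by nlinarith [mul_nonneg (Real.sqrt_nonneg 3) h1.le])]
    have hv : H (p₁+p₂) (p₂-p₁) 0 < 0 := by
      rw [hHval]
      nlinarith [mul_pos (mul_pos hb ha) (show 0 < p₂^2 - 3*p₁^2 by linarith)]
    exact aux_max _ hcont hv hd0 hdd
end

section
/- For the tropical 2-soliton solution with 0 < p_1 < p_2 and ℓ = log((p_2+p_1)/(p_2−p_1)): on the line x = x_{\bar1\bar1,\bar11}(t) = −p_2² t − ℓ/(2p_2), one has Θ_{11} − Θ_{1\bar1} = −2ℓ < 0. Hence the triple coincidence of Θ_{\bar1\bar1}, Θ_{\bar11}, Θ_{11} is non-visible: at that event Θ_{1\bar1} strictly exceeds these three phases. -/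
open Real

noncomputable def θ (p x t : ℝ) : ℝ := p * (x + p^2 * t)

noncomputable def Θmm (p₁ p₂ x t : ℝ) : ℝ := -θ p₁ x t - θ p₂ x t + Real.log (p₂ - p₁)
noncomputable def Θpm (p₁ p₂ x t : ℝ) : ℝ := θ p₁ x t - θ p₂ x t + Real.log (p₁ + p₂)
noncomputable def Θmp (p₁ p₂ x t : ℝ) : ℝ := -θ p₁ x t + θ p₂ x t + Real.log (p₁ + p₂)
noncomputable def Θpp (p₁ p₂ x t : ℝ) : ℝ := θ p₁ x t + θ p₂ x t + Real.log (p₂ - p₁)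

noncomputable def ℓ (p₁ p₂ : ℝ) : ℝ := Real.log ((p₂ + p₁) / (p₂ - p₁))

theorem nonvisible_triple_mm_mp_pp (p₁ p₂ : ℝ) (h1 : 0 < p₁) (h12 : p₁ < p₂) :
    (∀ t : ℝ,
      Θpp p₁ p₂ (-p₂^2 * t - ℓ p₁ p₂ / (2*p₂)) t
        - Θpm p₁ p₂ (-p₂^2 * t - ℓ p₁ p₂ / (2*p₂)) t = -2 * ℓ p₁ p₂)
    ∧ -2 * ℓ p₁ p₂ < 0
    ∧ (∀ x t : ℝ, Θmm p₁ p₂ x t = Θmp p₁ p₂ x t → Θmp p₁ p₂ x t = Θpp p₁ p₂ x t →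
        Θpp p₁ p₂ x t < Θpm p₁ p₂ x t) := by
  have hsub : (0:ℝ) < p₂ - p₁ := by linarith
  have hadd : (0:ℝ) < p₂ + p₁ := by linarith
  have hℓ : ℓ p₁ p₂ = Real.log (p₂ + p₁) - Real.log (p₂ - p₁) := by
    rw [ℓ, Real.log_div hadd.ne' hsub.ne']
  have hℓpos : 0 < ℓ p₁ p₂ := by
    rw [ℓ]
    apply Real.log_pos
    rw [lt_div_iff₀ hsub]
    linarith
  have hcomm : Real.log (p₁ + p₂) = Real.log (p₂ + p₁) := by ring_nf
  refine ⟨fun t => ?_, by linarith, fun x t h1' h2' => ?_⟩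
  · have hp2 : (2 * p₂) ≠ 0 := ne_of_gt (by linarith)
    have hp2' : p₂ ≠ 0 := ne_of_gt (by linarith)
    simp only [Θpp, Θpm, θ, hcomm, hℓ]
    field_simp
    ring
  · simp only [Θmm, Θmp, Θpp, Θpm, hcomm] at *
    -- from h1': -θ₂ + log(p₂-p₁) = θ₂ + log(p₂+p₁)
    have h2θ : 2 * θ p₂ x t = Real.log (p₂ - p₁) - Real.log (p₂ + p₁) := by linarith
    have : Real.log (p₂ - p₁) - Real.log (p₂ + p₁) < 0 := by linarith [hℓ, hℓpos]
    linarith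
end

section
/- For the tropical 2-soliton solution with 0 < p_1 < p_2: on the boundary line x = x_{\bar1\bar1,11}(t) = −(p_1² − p_1 p_2 + p_2²) t (where Θ_{\bar1\bar1} = Θ_{11}), one has Θ_{11} − Θ_{1\bar1} = 2 p_1 p_2 (p_2−p_1) t − ℓ and Θ_{11} − Θ_{\bar11} = −2 p_1 p_2 (p_2−p_1) t − ℓ. Consequently, at every point of this line at least one of Θ_{1\bar1}, Θ_{\bar11} strictly exceeds Θ_{11}, i.e., the entire line is non-visible. -/
open Real

theorem nonvisible_line_mm_pp (p₁ p₂ : ℝ) (h1 : 0 < p₁) (h12 : p₁ < p₂) :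
    ∀ t : ℝ,
      Θmm p₁ p₂ (-(p₁^2 - p₁*p₂ + p₂^2) * t) t = Θpp p₁ p₂ (-(p₁^2 - p₁*p₂ + p₂^2) * t) t
      ∧ Θpp p₁ p₂ (-(p₁^2 - p₁*p₂ + p₂^2) * t) t
          - Θpm p₁ p₂ (-(p₁^2 - p₁*p₂ + p₂^2) * t) t
        = 2*p₁*p₂*(p₂ - p₁) * t - ℓ p₁ p₂
      ∧ Θpp p₁ p₂ (-(p₁^2 - p₁*p₂ + p₂^2) * t) t
          - Θmp p₁ p₂ (-(p₁^2 - p₁*p₂ + p₂^2) * t) t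
        = -(2*p₁*p₂*(p₂ - p₁)) * t - ℓ p₁ p₂
      ∧ (Θpp p₁ p₂ (-(p₁^2 - p₁*p₂ + p₂^2) * t) t
            < Θpm p₁ p₂ (-(p₁^2 - p₁*p₂ + p₂^2) * t) t
          ∨ Θpp p₁ p₂ (-(p₁^2 - p₁*p₂ + p₂^2) * t) t
            < Θmp p₁ p₂ (-(p₁^2 - p₁*p₂ + p₂^2) * t) t) := by

  intro t
  have hd : 0 < p₂ - p₁ := by linarith
  have hs : 0 < p₂ + p₁ := by linarith
  have hℓ : 0 < ℓ p₁ p₂ := by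
    have : (1:ℝ) < (p₂ + p₁) / (p₂ - p₁) := by
      rw [lt_div_iff₀ hd]; linarith
    exact Real.log_pos this
  have hlog : Real.log (p₁ + p₂) - Real.log (p₂ - p₁) = ℓ p₁ p₂ := by
    rw [ℓ, Real.log_div (by positivity) (ne_of_gt hd), add_comm p₁ p₂]
  refine ⟨?_, ?_, ?_, ?_⟩
  · simp only [Θmm, Θpp, θ]; ring
  · simp only [Θpp, Θpm, θ]; rw [← hlog]; ring
  · simp only [Θpp, Θmp, θ]; rw [← hlog]; ring
  · have h2 : Θpp p₁ p₂ (-(p₁^2 - p₁*p₂ + p₂^2) * t) t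
          - Θpm p₁ p₂ (-(p₁^2 - p₁*p₂ + p₂^2) * t) t
        = 2*p₁*p₂*(p₂ - p₁) * t - ℓ p₁ p₂ := by
      simp only [Θpp, Θpm, θ]; rw [← hlog]; ring
    have h3 : Θpp p₁ p₂ (-(p₁^2 - p₁*p₂ + p₂^2) * t) t
          - Θmp p₁ p₂ (-(p₁^2 - p₁*p₂ + p₂^2) * t) t
        = -(2*p₁*p₂*(p₂ - p₁)) * t - ℓ p₁ p₂ := by
      simp only [Θpp, Θmp, θ]; rw [← hlog]; ring
    rcases le_or_gt t 0 with ht | ht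
    · left
      have : 2*p₁*p₂*(p₂ - p₁) * t ≤ 0 := mul_nonpos_of_nonneg_of_nonpos (by nlinarith [mul_pos (mul_pos h1 (h1.trans h12)) hd]) ht
      linarith
    · right
      have : -(2*p₁*p₂*(p₂ - p₁)) * t ≤ 0 := by nlinarith [mul_pos (mul_pos (mul_pos two_pos h1) (lt_trans h1 h12)) hd, mul_pos (mul_pos (mul_pos two_pos h1) (lt_trans h1 h12)) (mul_pos hd ht)]
      linarith
end

section
/- At the triple phase coincidence event of Θ_{1\bar1}, Θ_{\bar11}, Θ_{11} (occurring at time t = −ℓ/(2p_1p_2(p_2+p_1))), one has Θ_{11} − Θ_{\bar1\bar1} = 2ℓ > 0; hence this triple event is visible. Similarly, at the triple coincidence of Θ_{\bar1\bar1}, Θ_{1\bar1}, Θ_{\bar11} at time t = ℓ/(2p_1p_2(p_2+p_1)), one has Θ_{\bar1\bar1} − Θ_{11} = 2ℓ > 0. -/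
open Real

theorem visible_triple_events (p₁ p₂ : ℝ) (h1 : 0 < p₁) (h12 : p₁ < p₂) :
    (∀ x t : ℝ, Θpm p₁ p₂ x t = Θmp p₁ p₂ x t → Θmp p₁ p₂ x t = Θpp p₁ p₂ x t →
        t = -(ℓ p₁ p₂) / (2*p₁*p₂*(p₂ + p₁))
        ∧ Θpp p₁ p₂ x t - Θmm p₁ p₂ x t = 2 * ℓ p₁ p₂
        ∧ 0 < 2 * ℓ p₁ p₂)
    ∧ (∀ x t : ℝ, Θmm p₁ p₂ x t = Θpm p₁ p₂ x t → Θpm p₁ p₂ x t = Θmp p₁ p₂ x t →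
        t = ℓ p₁ p₂ / (2*p₁*p₂*(p₂ + p₁))
        ∧ Θmm p₁ p₂ x t - Θpp p₁ p₂ x t = 2 * ℓ p₁ p₂
        ∧ 0 < 2 * ℓ p₁ p₂) := by
  have hp2 : 0 < p₂ := h1.trans h12
  have hd : 0 < p₂ - p₁ := sub_pos.2 h12
  have hs : 0 < p₂ + p₁ := by linarith
  have hℓ : ℓ p₁ p₂ = Real.log (p₁ + p₂) - Real.log (p₂ - p₁) := by
    rw [ℓ, Real.log_div hs.ne' hd.ne', add_comm p₂ p₁]
  have hℓpos : 0 < ℓ p₁ p₂ := Real.log_pos (by rw [lt_div_iff₀ hd]; linarith)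
  have hD : (2*p₁*p₂*(p₂ + p₁)) ≠ 0 := by positivity
  have hne : p₁ - p₂ ≠ 0 := by intro h; linarith
  constructor
  · intro x t hA hB
    simp only [Θpm, Θmp, Θpp, Θmm, θ] at hA hB ⊢
    have e1 : p₁ * (x + p₁^2 * t) = p₂ * (x + p₂^2 * t) := by linarith
    have e2 : 2 * (p₁ * (x + p₁^2 * t)) =
        Real.log (p₁ + p₂) - Real.log (p₂ - p₁) := by linarith
    refine ⟨?_, by linarith, by linarith⟩
    rw [eq_div_iff hD, hℓ]
    apply mul_left_cancel₀ hne
    linear_combination (2*p₁) * e1 + (p₂-p₁) * e2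
  · intro x t hA hB
    simp only [Θpm, Θmp, Θpp, Θmm, θ] at hA hB ⊢
    have e1 : p₁ * (x + p₁^2 * t) = p₂ * (x + p₂^2 * t) := by linarith
    have e2 : 2 * (p₁ * (x + p₁^2 * t)) =
        -(Real.log (p₁ + p₂) - Real.log (p₂ - p₁)) := by linarith
    refine ⟨?_, by linarith, by linarith⟩
    rw [eq_div_iff hD, hℓ]
    apply mul_left_cancel₀ hne
    linear_combination (2*p₁) * e1 + (p₂-p₁) * e2
end

section
/- The two visible triple-phase events of the tropical 2-soliton solution are spatially separated: x_{1\bar1,\bar11,11} − x_{\bar1\bar1,1\bar1,\bar11} = ℓ (p_1² + p_1 p_2 + p_2²)/(p_1 p_2 (p_1+p_2)) > 0, where x denotes the x-coordinate of the respective triple coincidence. -/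
open Real

theorem visible_triple_events_spatial_separation (p₁ p₂ : ℝ) (h1 : 0 < p₁) (h12 : p₁ < p₂) :
    ∀ x₁ t₁ x₂ t₂ : ℝ,
      (Θpm p₁ p₂ x₁ t₁ = Θmp p₁ p₂ x₁ t₁ ∧ Θmp p₁ p₂ x₁ t₁ = Θpp p₁ p₂ x₁ t₁) →
      (Θmm p₁ p₂ x₂ t₂ = Θpm p₁ p₂ x₂ t₂ ∧ Θpm p₁ p₂ x₂ t₂ = Θmp p₁ p₂ x₂ t₂) →
      x₁ - x₂ = ℓ p₁ p₂ * (p₁^2 + p₁*p₂ + p₂^2) / (p₁*p₂*(p₁ + p₂))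
      ∧ 0 < x₁ - x₂ := by
  intro x₁ t₁ x₂ t₂ hA hB
  have hp2 : 0 < p₂ := h1.trans h12
  have hd : 0 < p₂ - p₁ := by linarith
  have hs : 0 < p₂ + p₁ := by linarith
  have hLdef : ℓ p₁ p₂ = Real.log (p₁ + p₂) - Real.log (p₂ - p₁) := by
    rw [ℓ, Real.log_div (by linarith) (by linarith), add_comm p₂ p₁]
  set L := ℓ p₁ p₂ with hL
  obtain ⟨hA1, hA2⟩ := hA
  obtain ⟨hB1, hB2⟩ := hB
  simp only [Θmm, Θpm, Θmp, Θpp, θ] at hA1 hA2 hB1 hB2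
  -- equations at event 1
  have e1 : p₁ * x₁ + p₁^3 * t₁ = L / 2 := by
    rw [hLdef] at *; nlinarith [hA1, hA2]
  have e2 : p₂ * x₁ + p₂^3 * t₁ = L / 2 := by
    rw [hLdef] at *; nlinarith [hA1, hA2]
  -- equations at event 2
  have e3 : p₁ * x₂ + p₁^3 * t₂ = -(L / 2) := by
    rw [hLdef] at *; nlinarith [hB1, hB2]
  have e4 : p₂ * x₂ + p₂^3 * t₂ = -(L / 2) := by
    rw [hLdef] at *; nlinarith [hB1, hB2]
  have key : ((x₁ - x₂) * (p₁ * p₂ * (p₁ + p₂))) * (p₂ - p₁)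
      = (L * (p₁^2 + p₁*p₂ + p₂^2)) * (p₂ - p₁) := by
    linear_combination p₂^3 * e1 - p₁^3 * e2 - p₂^3 * e3 + p₁^3 * e4
  have key2 : (x₁ - x₂) * (p₁ * p₂ * (p₁ + p₂)) = L * (p₁^2 + p₁*p₂ + p₂^2) :=
    mul_right_cancel₀ (ne_of_gt hd) key
  have hden : p₁ * p₂ * (p₁ + p₂) ≠ 0 := by positivity
  have hx : x₁ - x₂ = L * (p₁^2 + p₁*p₂ + p₂^2) / (p₁*p₂*(p₁ + p₂)) := by
    field_simp
    linarith [key2]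
  refine ⟨hx, ?_⟩
  have hLpos : 0 < L := by
    rw [hL, ℓ]
    apply Real.log_pos
    rw [lt_div_iff₀ hd]; linarith
  rw [hx]
  positivity
end
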